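/- Consider the backlog dynamics δ̇(t) = λ̄(t) - u(t) with switching arrival rate λ̄ = λ when δ ≤ δ_min and λ̄ = ρ·λ when δ ≥ δ_max, where 0 < ρ < 1, 0 ≤ δ_min < δ_max, and the aggregate scheduling rate satisfies ρ·λ < u(t) ≤ λ for all t. If δ(0) ∈ [δ_min, δ_max], then δ(t) ∈ [δ_min, δ_max] for all t ≥ 0. -/
import Mathlib


theorem backlog_invariant (δ lamBar u : ℝ → ℝ) (lam ρ δmin δmax : ℝ)
    (hρ : 0 < ρ) (hρ1 : ρ < 1) (hδmin : 0 ≤ δmin) (hδ : δmin < δmax)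
    (hlam : 0 < lam)
    (hswitch_lo : ∀ t, δ t ≤ δmin → lamBar t = lam)
    (hswitch_hi : ∀ t, δ t ≥ δmax → lamBar t = ρ * lam)
    (hderiv : ∀ t, HasDerivAt δ (lamBar t - u t) t)
    (hu : ∀ t, ρ * lam < u t ∧ u t ≤ lam)
    (h0 : δ 0 ∈ Set.Icc δmin δmax) :
    ∀ t : ℝ, 0 ≤ t → δ t ∈ Set.Icc δmin δmax := by
  have hcont : Continuous δ := by
    rw [continuous_iff_continuousAt]; exact fun x => (hderiv x).continuousAt
  have hdiff : Differentiable ℝ δ := fun x => (hderiv x).differentiableAt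
  have hderiv' : ∀ x, deriv δ x = lamBar x - u x := fun x => (hderiv x).deriv
  intro t ht
  constructor
  · by_contra hlt
    push_neg at hlt
    have ht0 : 0 < t := by
      rcases lt_or_eq_of_le ht with h | h
      · exact h
      · exact absurd h0.1 (by rw [← h] at hlt; exact not_le.2 hlt)
    set S := Set.Icc 0 t ∩ δ ⁻¹' Set.Ici δmin with hS
    have hSclosed : IsClosed S := isClosed_Icc.inter (isClosed_Ici.preimage hcont)
    have hSne : S.Nonempty := ⟨0, ⟨le_refl 0, le_of_lt ht0⟩, h0.1⟩
    have hSbdd : BddAbove S := ⟨t, fun x hx => hx.1.2⟩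
    set s := sSup S with hs
    have hsS : s ∈ S := hSclosed.csSup_mem hSne hSbdd
    have hst : s ≤ t := hsS.1.2
    have hslt : s < t := lt_of_le_of_ne hst (by
      intro h; rw [h] at hsS; exact absurd hsS.2 (not_le.2 hlt))
    have hmid : ∀ r, s < r → r ≤ t → δ r < δmin := by
      intro r hr hrt
      by_contra h
      push_neg at h
      have hrS : r ∈ S := ⟨⟨le_trans hsS.1.1 hr.le, hrt⟩, h⟩
      exact absurd (le_csSup hSbdd hrS) (not_le.2 hr)
    have hmono : MonotoneOn δ (Set.Icc s t) := by
      apply monotoneOn_of_deriv_nonneg (convex_Icc s t) hcont.continuousOn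
        (fun x _ => (hdiff x).differentiableWithinAt)
      intro x hx
      rw [interior_Icc] at hx
      rw [hderiv' x, hswitch_lo x (le_of_lt (hmid x hx.1 hx.2.le))]
      linarith [(hu x).2]
    have hle : δ s ≤ δ t := hmono ⟨le_refl s, hst⟩ ⟨hst, le_refl t⟩ hst
    have : δmin ≤ δ s := hsS.2
    linarith
  · by_contra hlt
    push_neg at hlt
    have ht0 : 0 < t := by
      rcases lt_or_eq_of_le ht with h | h
      · exact h
      · exact absurd h0.2 (by rw [← h] at hlt; exact not_le.2 hlt)
    set S := Set.Icc 0 t ∩ δ ⁻¹' Set.Iic δmax with hS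
    have hSclosed : IsClosed S := isClosed_Icc.inter (isClosed_Iic.preimage hcont)
    have hSne : S.Nonempty := ⟨0, ⟨le_refl 0, le_of_lt ht0⟩, h0.2⟩
    have hSbdd : BddAbove S := ⟨t, fun x hx => hx.1.2⟩
    set s := sSup S with hs
    have hsS : s ∈ S := hSclosed.csSup_mem hSne hSbdd
    have hst : s ≤ t := hsS.1.2
    have hslt : s < t := lt_of_le_of_ne hst (by
      intro h; rw [h] at hsS; exact absurd hsS.2 (not_le.2 hlt))
    have hmid : ∀ r, s < r → r ≤ t → δmax < δ r := by
      intro r hr hrt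
      by_contra h
      push_neg at h
      have hrS : r ∈ S := ⟨⟨le_trans hsS.1.1 hr.le, hrt⟩, h⟩
      exact absurd (le_csSup hSbdd hrS) (not_le.2 hr)
    have hmono : AntitoneOn δ (Set.Icc s t) := by
      apply antitoneOn_of_deriv_nonpos (convex_Icc s t) hcont.continuousOn
        (fun x _ => (hdiff x).differentiableWithinAt)
      intro x hx
      rw [interior_Icc] at hx
      rw [hderiv' x, hswitch_hi x (le_of_lt (hmid x hx.1 hx.2.le))]
      linarith [(hu x).1]
    have hle : δ t ≤ δ s := hmono ⟨le_refl s, hst⟩ ⟨hst, le_refl t⟩ hst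
    have : δ s ≤ δmax := hsS.2
    linarith
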